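/- Let A, C ∈ ℝ with C > 0, and set K₃ = 1/C, K₂ = −3A/C, K₁ = 3A²/C + 1, K₀ = −A(A²+C)/C, and P(θ) = K₃cos³θ + K₂cos²θ sin θ + K₁cos θ sin²θ + K₀sin³θ. Then the Riemannian norm f(θ) = √(cos²θ − 2A cos θ sin θ + (A²+C)sin²θ) (coming from the matrix g = [[1, −A],[−A, A²+C]]) satisfies the ODE (f + f'')·P = −sin θ·f' + cos θ·f for all θ. -/

import Mathlib

open Real

theorem stmt10 (A C : ℝ) (hC : 0 < C)
    (K₀ K₁ K₂ K₃ : ℝ)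
    (hK₃ : K₃ = 1 / C) (hK₂ : K₂ = -(3 * A) / C)
    (hK₁ : K₁ = 3 * A ^ 2 / C + 1) (hK₀ : K₀ = -(A * (A ^ 2 + C)) / C)
    (P : ℝ → ℝ)
    (hP : ∀ θ, P θ = K₃ * cos θ ^ 3 + K₂ * cos θ ^ 2 * sin θ
        + K₁ * cos θ * sin θ ^ 2 + K₀ * sin θ ^ 3)
    (f : ℝ → ℝ)
    (hf : ∀ θ, f θ = Real.sqrt
      (cos θ ^ 2 - 2 * A * cos θ * sin θ + (A ^ 2 + C) * sin θ ^ 2)) :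
    ∀ θ, (f θ + deriv (deriv f) θ) * P θ
        = -sin θ * deriv f θ + cos θ * f θ := by
  have hfeq : f = fun y => Real.sqrt
      (cos y ^ 2 - 2 * A * cos y * sin y + (A ^ 2 + C) * sin y ^ 2) := funext hf
  set Qf : ℝ → ℝ := fun y => cos y ^ 2 - 2 * A * cos y * sin y + (A ^ 2 + C) * sin y ^ 2
    with hQf
  set Q1 : ℝ → ℝ := fun y => (2 * A ^ 2 + 2 * C - 2) * sin y * cos y
      - 2 * A * (cos y ^ 2 - sin y ^ 2) with hQ1
  set Q2 : ℝ → ℝ := fun y => (2 * A ^ 2 + 2 * C - 2) * (cos y ^ 2 - sin y ^ 2)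
      + 8 * A * sin y * cos y with hQ2
  have hQpos : ∀ x, 0 < Qf x := by
    intro x
    have h1 := sin_sq_add_cos_sq x
    show 0 < cos x ^ 2 - 2 * A * cos x * sin x + (A ^ 2 + C) * sin x ^ 2
    rcases eq_or_ne (sin x) 0 with h | h
    · rw [h] at h1 ⊢
      nlinarith
    · have hs2 : 0 < sin x ^ 2 := by positivity
      nlinarith [sq_nonneg (cos x - A * sin x), mul_pos hC hs2]
  have hQd : ∀ x, HasDerivAt Qf (Q1 x) x := by
    intro x
    have h := (((Real.hasDerivAt_cos x).pow 2).sub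
        ((((Real.hasDerivAt_cos x).const_mul (2 * A)).mul (Real.hasDerivAt_sin x)))).add
        (((Real.hasDerivAt_sin x).pow 2).const_mul (A ^ 2 + C))
    refine h.congr_deriv ?_
    ring
  have hQ1d : ∀ x, HasDerivAt Q1 (Q2 x) x := by
    intro x
    have h := ((((Real.hasDerivAt_sin x).const_mul (2 * A ^ 2 + 2 * C - 2)).mul
        (Real.hasDerivAt_cos x))).sub
        ((((Real.hasDerivAt_cos x).pow 2).sub ((Real.hasDerivAt_sin x).pow 2)).const_mul
          (2 * A))
    refine h.congr_deriv ?_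
    ring
  have hsd : ∀ x, HasDerivAt f (Q1 x / (2 * Real.sqrt (Qf x))) x := by
    intro x
    rw [hfeq]
    have h := (Real.hasDerivAt_sqrt (ne_of_gt (hQpos x))).comp x (hQd x)
    refine h.congr_deriv ?_
    ring
  have hderiv1 : deriv f = fun x => Q1 x / (2 * Real.sqrt (Qf x)) :=
    funext fun x => (hsd x).deriv
  intro θ
  have hsq : Real.sqrt (Qf θ) ≠ 0 := ne_of_gt (Real.sqrt_pos.mpr (hQpos θ))
  have hsd2 : HasDerivAt (deriv f)
      ((Q2 θ * (2 * Real.sqrt (Qf θ)) - Q1 θ * (2 * (1 / (2 * Real.sqrt (Qf θ)) * Q1 θ)))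
        / (2 * Real.sqrt (Qf θ)) ^ 2) θ := by
    rw [hderiv1]
    exact (hQ1d θ).div
      (((Real.hasDerivAt_sqrt (ne_of_gt (hQpos θ))).comp θ (hQd θ)).const_mul 2)
      (by simpa using hsq)
  rw [hsd2.deriv, hderiv1, hf θ, hP θ, hK₀, hK₁, hK₂, hK₃]
  beta_reduce
  set t := Real.sqrt (Qf θ) with htdef
  have ht2 : t ^ 2 = cos θ ^ 2 - 2 * A * cos θ * sin θ + (A ^ 2 + C) * sin θ ^ 2 :=
    Real.sq_sqrt (le_of_lt (hQpos θ))
  have ht0 : 0 < t := Real.sqrt_pos.mpr (hQpos θ)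
  have hsq : t ≠ 0 := ne_of_gt ht0
  have hpy := sin_sq_add_cos_sq θ
  have hQ1θ : Q1 θ = (2 * A ^ 2 + 2 * C - 2) * sin θ * cos θ
      - 2 * A * (cos θ ^ 2 - sin θ ^ 2) := rfl
  have hQ2θ : Q2 θ = (2 * A ^ 2 + 2 * C - 2) * (cos θ ^ 2 - sin θ ^ 2)
      + 8 * A * sin θ * cos θ := rfl
  rw [hQ1θ, hQ2θ]
  have hC0 : C ≠ 0 := ne_of_gt hC
  field_simp
  rw [show t ^ 4 = (t ^ 2) ^ 2 by ring, ht2]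
  linear_combination ((cos θ ^ 2 - 2 * A * cos θ * sin θ + (A ^ 2 + C) * sin θ ^ 2) * 2 * C * (-(sin θ * ((A ^ 2 + C - 1) * cos θ * sin θ - A * (cos θ ^ 2 - sin θ ^ 2))) + (cos θ ^ 2 - 2 * A * cos θ * sin θ + (A ^ 2 + C) * sin θ ^ 2) * cos θ)) * hpy
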